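/- (König's theorem) Let A be an s×n matrix of zeros and ones with s ≤ n, and let m be the smallest integer such that, for some p ∈ ℕ, all ones of A are contained in the union of p rows and m−p columns. Then m equals the maximal number of transversal ones in A, i.e., m = max over injections σ of Σ_{i=1}^s a_{i,σ(i)}. -/

import Mathlib

open Finset

noncomputable def jacobiNumber {s n : ℕ} (A : Fin s → Fin n → ℕ) : ℕ :=
  Finset.univ.sup fun σ : Fin s ↪ Fin n => ∑ i, A i (σ i)

lemma konig_lower {s n : ℕ} (hsn : s ≤ n) (A : Fin s → Fin n → ℕ)
    (h01 : ∀ i j, A i j = 0 ∨ A i j = 1) (d : ℕ)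
    (hd : ∀ T : Finset (Fin s),
      T.card - (T.biUnion fun i => Finset.univ.filter fun j => A i j = 1).card ≤ d) :
    s - d ≤ jacobiNumber A := by
  classical
  rcases Nat.eq_zero_or_pos n with rfl | hn
  · have hs0 : s = 0 := le_antisymm hsn (Nat.zero_le _)
    subst hs0
    simp
  set NN : Finset (Fin s) → Finset (Fin n) :=
    fun T => T.biUnion fun i => Finset.univ.filter fun j => A i j = 1 with hNN
  set f : Fin s → Finset (Fin n ⊕ Fin d) :=
    fun i => (NN {i}).disjSum Finset.univ with hf
  have hall : ∀ S : Finset (Fin s), S.card ≤ (S.biUnion f).card := by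
    intro S
    rcases S.eq_empty_or_nonempty with rfl | ⟨i0, hi0⟩
    · simp
    · have hsub : (NN S).disjSum Finset.univ ⊆ S.biUnion f := by
        intro x hx
        rw [Finset.mem_disjSum] at hx
        rcases hx with ⟨a, ha, rfl⟩ | ⟨b, hb, rfl⟩
        · rw [hNN] at ha
          simp only [Finset.mem_biUnion, Finset.mem_filter] at ha
          obtain ⟨i, hiS, -, hji⟩ := ha
          refine Finset.mem_biUnion.2 ⟨i, hiS, ?_⟩
          rw [hf]
          exact Finset.inl_mem_disjSum.2 (by simp [hNN, hji])
        · exact Finset.mem_biUnion.2 ⟨i0, hi0,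
            Finset.inr_mem_disjSum.2 (Finset.mem_univ b)⟩
      have hdle : S.card - (NN S).card ≤ d := hd S
      have hcc := Finset.card_le_card hsub
      rw [Finset.card_disjSum, Finset.card_univ, Fintype.card_fin] at hcc
      omega
  obtain ⟨g, hginj, hgmem⟩ :=
    (Finset.all_card_le_biUnion_card_iff_exists_injective f).1 hall
  set T' : Finset (Fin s) := Finset.univ.filter (fun i => (g i).isLeft) with hT'
  have hT'card : s - d ≤ T'.card := by
    have h1 : T'ᶜ.card ≤ (Finset.univ.filter
        (fun x : Fin n ⊕ Fin d => x.isRight)).card := by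
      apply Finset.card_le_card_of_injOn g
      · intro i hi
        simp only [hT', Finset.mem_coe, Finset.mem_compl, Finset.mem_filter, Finset.mem_univ,
          true_and, not_true] at hi ⊢
        cases hgi : g i with
        | inl a => exact absurd (by simp [hgi]) hi
        | inr b => simp
      · exact hginj.injOn
    have h2 : (Finset.univ.filter (fun x : Fin n ⊕ Fin d => x.isRight))
        ⊆ Finset.univ.map ⟨Sum.inr, Sum.inr_injective⟩ := by
      intro x hx
      cases x with
      | inl a => simp at hx
      | inr b => exact Finset.mem_map.2 ⟨b, Finset.mem_univ b, rfl⟩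
    have h3 := (Finset.card_le_card h2).trans_eq (by
      rw [Finset.card_map, Finset.card_univ, Fintype.card_fin])
    have h4 : T'ᶜ.card = s - T'.card := by
      rw [Finset.card_compl, Fintype.card_fin]
    have h5 : T'.card ≤ s := by simpa using Finset.card_le_univ T'
    omega
  -- matched columns
  set el : Fin s → Fin n := fun i => Sum.elim id (fun _ => ⟨0, hn⟩) (g i) with hel
  set J : Finset (Fin n) :=
    Finset.univ.filter (fun j => ∃ i, g i = Sum.inl j) with hJ
  have hJT : J ⊆ T'.image el := by
    intro j hj
    rw [hJ] at hj
    obtain ⟨i, hi⟩ := (Finset.mem_filter.1 hj).2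
    refine Finset.mem_image.2 ⟨i, ?_, ?_⟩
    · simp [hT', hi]
    · simp [hel, hi]
  have hJcard : J.card ≤ T'.card :=
    (Finset.card_le_card hJT).trans (Finset.card_image_le)
  -- the embedding on leftover rows
  have hcards : Fintype.card {i // i ∈ T'ᶜ} ≤ Fintype.card {j // j ∈ Jᶜ} := by
    rw [Fintype.card_coe, Fintype.card_coe, Finset.card_compl, Finset.card_compl,
      Fintype.card_fin, Fintype.card_fin]
    have h5 : T'.card ≤ s := by simpa using Finset.card_le_univ T'
    omega
  obtain ⟨e⟩ := Function.Embedding.nonempty_of_card_le hcards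
  -- the transversal
  have hcompl : ∀ i : Fin s, ¬ (g i).isLeft = true → i ∈ T'ᶜ := by
    intro i h
    simp only [hT', Finset.mem_compl, Finset.mem_filter, Finset.mem_univ, true_and]
    exact h
  set σf : Fin s → Fin n := fun i =>
    if h : (g i).isLeft then (g i).getLeft h else (e ⟨i, hcompl i h⟩ : {j // j ∈ Jᶜ}) with hσ
  have memJ : ∀ (i : Fin s) (h : (g i).isLeft = true), (g i).getLeft h ∈ J := by
    intro i h
    rw [hJ]
    exact Finset.mem_filter.2 ⟨Finset.mem_univ _, ⟨i, (Sum.inl_getLeft _ h).symm⟩⟩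
  have hσinj : Function.Injective σf := by
    intro i1 i2 heq
    rw [hσ] at heq
    dsimp only at heq
    by_cases h1 : (g i1).isLeft <;> by_cases h2 : (g i2).isLeft
    · rw [dif_pos h1, dif_pos h2] at heq
      apply hginj
      rw [← Sum.inl_getLeft (g i1) h1, ← Sum.inl_getLeft (g i2) h2, heq]
    · rw [dif_pos h1, dif_neg h2] at heq
      exact absurd (heq ▸ memJ i1 h1) (Finset.mem_compl.1 (e ⟨i2, hcompl i2 h2⟩).2)
    · rw [dif_neg h1, dif_pos h2] at heq
      exact absurd (heq ▸ memJ i2 h2) (Finset.mem_compl.1 (e ⟨i1, hcompl i1 h1⟩).2)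
    · rw [dif_neg h1, dif_neg h2] at heq
      have := e.injective (Subtype.ext heq)
      exact congrArg Subtype.val this
  have hones : ∀ i ∈ T', A i (σf i) = 1 := by
    intro i hi
    rw [hT', Finset.mem_filter] at hi
    have h : (g i).isLeft = true := hi.2
    have hmem := hgmem i
    rw [hf] at hmem
    rw [← Sum.inl_getLeft (g i) h] at hmem
    have := Finset.inl_mem_disjSum.1 hmem
    rw [hNN] at this
    simp only [Finset.mem_biUnion, Finset.mem_singleton, Finset.mem_filter] at this
    obtain ⟨i', rfl, -, hA⟩ := this
    rw [hσ]
    simpa [dif_pos h] using hA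
  have hsum : T'.card ≤ ∑ i, A i (σf i) := by
    calc T'.card = ∑ i ∈ T', A i (σf i) := by
          rw [Finset.sum_congr rfl hones]; simp
      _ ≤ ∑ i, A i (σf i) :=
          Finset.sum_le_sum_of_subset (Finset.subset_univ T')
  calc s - d ≤ T'.card := hT'card
    _ ≤ ∑ i, A i (σf i) := hsum
    _ ≤ jacobiNumber A := Finset.le_sup (f := fun σ : Fin s ↪ Fin n => ∑ i, A i (σ i))
        (Finset.mem_univ ⟨σf, hσinj⟩)

theorem konig {s n : ℕ} (hsn : s ≤ n) (A : Fin s → Fin n → ℕ)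
    (h01 : ∀ i j, A i j = 0 ∨ A i j = 1) :
    sInf {m : ℕ | ∃ (R : Finset (Fin s)) (C : Finset (Fin n)),
        (∀ i j, A i j = 1 → i ∈ R ∨ j ∈ C) ∧ R.card + C.card = m}
      = jacobiNumber A := by
  classical
  set S := {m : ℕ | ∃ (R : Finset (Fin s)) (C : Finset (Fin n)),
      (∀ i j, A i j = 1 → i ∈ R ∨ j ∈ C) ∧ R.card + C.card = m} with hS
  have hA1 : ∀ i j, A i j ≤ 1 := fun i j => by rcases h01 i j with h | h <;> omega
  have hSne : S.Nonempty :=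
    ⟨s, Finset.univ, ∅, fun i j _ => Or.inl (Finset.mem_univ i), by simp⟩
  -- jacobi ≤ every cover
  have upper : ∀ m ∈ S, jacobiNumber A ≤ m := by
    rintro m ⟨R, C, hcov, rfl⟩
    apply Finset.sup_le
    intro σ _
    have hsplit : ∑ i ∈ R, A i (σ i) + ∑ i ∈ Rᶜ, A i (σ i) = ∑ i, A i (σ i) :=
      Finset.sum_add_sum_compl R _
    have h1 : ∑ i ∈ R, A i (σ i) ≤ R.card := by
      calc ∑ i ∈ R, A i (σ i) ≤ ∑ _i ∈ R, 1 :=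
            Finset.sum_le_sum (fun i _ => hA1 i (σ i))
        _ = R.card := by simp
    have h2 : ∑ i ∈ Rᶜ, A i (σ i) ≤ C.card := by
      have hle : ∀ i ∈ Rᶜ, A i (σ i) ≤ if σ i ∈ C then 1 else 0 := by
        intro i hi
        by_cases hC : σ i ∈ C
        · simp only [if_pos hC]; exact hA1 i (σ i)
        · simp only [if_neg hC]
          rcases h01 i (σ i) with h | h
          · omega
          · rcases hcov i (σ i) h with hR | hC'
            · exact absurd hR (Finset.mem_compl.1 hi)
            · exact absurd hC' hC
      calc ∑ i ∈ Rᶜ, A i (σ i) ≤ ∑ i ∈ Rᶜ, if σ i ∈ C then 1 else 0 :=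
            Finset.sum_le_sum hle
        _ = ∑ _i ∈ Rᶜ.filter (fun i => σ i ∈ C), 1 :=
            (Finset.sum_filter _ _).symm
        _ = (Rᶜ.filter (fun i => σ i ∈ C)).card := by simp
        _ ≤ C.card := by
            apply Finset.card_le_card_of_injOn σ
            · intro i hi; exact (Finset.mem_filter.1 hi).2
            · exact σ.injective.injOn
    omega
  -- abbreviations
  set NN : Finset (Fin s) → Finset (Fin n) :=
    fun T => T.biUnion fun i => Finset.univ.filter fun j => A i j = 1 with hNN
  set d : ℕ := Finset.univ.sup (fun T : Finset (Fin s) => T.card - (NN T).card)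
    with hd
  have hdle : ∀ T : Finset (Fin s), T.card - (NN T).card ≤ d := fun T => by
    rw [hd]; exact Finset.le_sup (f := fun T : Finset (Fin s) => T.card - (NN T).card) (Finset.mem_univ T)
  have lower : s - d ≤ jacobiNumber A := konig_lower hsn A h01 d (fun T => hdle T)
  -- There is a cover of size s - d
  have hcover : s - d ∈ S := by
    obtain ⟨T, -, hT⟩ := Finset.exists_mem_eq_sup Finset.univ
      ⟨∅, Finset.mem_univ ∅⟩ (fun T : Finset (Fin s) => T.card - (NN T).card)
    have hTs : T.card ≤ s := by simpa using Finset.card_le_univ T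
    by_cases hc : (NN T).card ≤ T.card
    · refine ⟨Tᶜ, NN T, ?_, ?_⟩
      · intro i j hij
        by_cases hiT : i ∈ T
        · exact Or.inr (by
            rw [hNN]
            exact Finset.mem_biUnion.2 ⟨i, hiT,
              Finset.mem_filter.2 ⟨Finset.mem_univ j, hij⟩⟩)
        · exact Or.inl (Finset.mem_compl.2 hiT)
      · rw [Finset.card_compl, Fintype.card_fin]
        omega
    · have hd0 : d = 0 := by omega
      refine ⟨Finset.univ, ∅, fun i j _ => Or.inl (Finset.mem_univ i), ?_⟩
      rw [Finset.card_univ, Fintype.card_fin, Finset.card_empty]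
      omega
  have h1 : sInf S ≤ s - d := Nat.sInf_le hcover
  have h2 : jacobiNumber A ≤ sInf S := le_csInf hSne upper
  omega
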